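/- For every n≥0, Dyck_n(d) = Mot_n(b,λ), where b=(b_0,b_1,...) and λ=(λ_0,λ_1,...) are the rational sequences with b_0=λ_0=1 and, for n≥1, b_n = 3 - 1/(F_{2n-1}·F_{2n-3}) and λ_n = 1 + 1/F_{2n-1}². -/

import Mathlib

/-- A step of a Motzkin path: up `(1,1)`, down `(1,-1)`, or horizontal `(1,0)`. -/
inductive MStep : Type
  | up : MStep
  | down : MStep
  | flat : MStep
  deriving DecidableEq

instance : Fintype MStep :=
  ⟨{MStep.up, MStep.down, MStep.flat}, by intro x; cases x <;> first | decide | simp⟩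

/-- The vertical displacement of a Motzkin step. -/
def MStep.val : MStep → ℤ
  | .up => 1
  | .down => -1
  | .flat => 0

/-- The height of the path after its first `k` steps. -/
def mHeight (l : List MStep) (k : ℕ) : ℤ := ((l.take k).map MStep.val).sum

/-- A list of steps is a Motzkin path if it never goes below the x-axis and ends at height 0. -/
def IsMotzkin (l : List MStep) : Prop :=
  (∀ k : ℕ, 0 ≤ mHeight l k) ∧ mHeight l l.length = 0

/-- The weight of a Motzkin path w.r.t. `(b, lam)`: a factor `b i` for every horizontal step
of height `i` and a factor `lam i` for every down step of height `i` (the height of a step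
being the `y`-coordinate of its ending point). -/
def mWeight (b lam : ℕ → ℚ) (l : List MStep) : ℚ :=
  ∏ i ∈ Finset.range l.length,
    match l.getD i MStep.up with
    | .up => 1
    | .flat => b (mHeight l (i + 1)).toNat
    | .down => lam (mHeight l (i + 1)).toNat

open Classical in
/-- `Mot_n(b,lam)`: the sum of the weights of all Motzkin paths of length `n`. -/
noncomputable def motSum (n : ℕ) (b lam : ℕ → ℚ) : ℚ :=
  ∑ f : Fin n → MStep,
    if IsMotzkin (List.ofFn f) then mWeight b lam (List.ofFn f) else 0

/-- A step of a Dyck path: up `(1,1)` or down `(1,-1)`. -/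
inductive DStep : Type
  | up : DStep
  | down : DStep
  deriving DecidableEq

instance : Fintype DStep :=
  ⟨{DStep.up, DStep.down}, by intro x; cases x <;> first | decide | simp⟩

/-- The vertical displacement of a Dyck step. -/
def DStep.val : DStep → ℤ
  | .up => 1
  | .down => -1

/-- The height of the path after its first `k` steps. -/
def dHeight (l : List DStep) (k : ℕ) : ℤ := ((l.take k).map DStep.val).sum

/-- A list of steps is a Dyck path if it never goes below the x-axis and ends at height 0. -/
def IsDyck (l : List DStep) : Prop :=
  (∀ k : ℕ, 0 ≤ dHeight l k) ∧ dHeight l l.length = 0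

/-- The weight of a Dyck path w.r.t. `c`: a factor `c i` for every down step of height `i`
(the height of a step being the `y`-coordinate of its ending point). -/
def dWeight (c : ℕ → ℚ) (l : List DStep) : ℚ :=
  ∏ i ∈ Finset.range l.length,
    match l.getD i DStep.up with
    | .up => 1
    | .down => c (dHeight l (i + 1)).toNat

open Classical in
/-- `Dyck_n(c)`: the sum of the weights of all Dyck paths of length `2n`. -/
noncomputable def dyckSum (n : ℕ) (c : ℕ → ℚ) : ℚ :=
  ∑ f : Fin (2 * n) → DStep,
    if IsDyck (List.ofFn f) then dWeight c (List.ofFn f) else 0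

/-- Fibonacci numbers extended to all integer indices:
`fibZ 0 = 0`, `fibZ 1 = 1`, `fibZ m = fibZ (m-1) + fibZ (m-2)` (so `fibZ (-1) = 1`). -/
def fibZ : ℤ → ℤ
  | Int.ofNat n => Nat.fib n
  | Int.negSucc n => (-1) ^ n * Nat.fib (n + 1)

def dwr (c : ℕ → ℚ) : ℤ → List DStep → ℚ
  | h, [] => if h = 0 then 1 else 0
  | h, .up :: t => dwr c (h+1) t
  | h, .down :: t => if 0 ≤ h - 1 then c (h-1).toNat * dwr c (h-1) t else 0

lemma dHeight_nil (k : ℕ) : dHeight [] k = 0 := by simp [dHeight]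

lemma dHeight_zero (l : List DStep) : dHeight l 0 = 0 := by simp [dHeight]

lemma dHeight_cons (s : DStep) (t : List DStep) (k : ℕ) :
    dHeight (s :: t) (k+1) = s.val + dHeight t k := by
  simp [dHeight, List.take_succ_cons]

lemma dcond_cons (s : DStep) (t : List DStep) (h : ℤ) (hh : 0 ≤ h) :
    ((∀ k : ℕ, 0 ≤ h + dHeight (s::t) k) ∧ h + dHeight (s::t) (s::t).length = 0) ↔
    ((∀ k : ℕ, 0 ≤ (h + s.val) + dHeight t k) ∧ (h + s.val) + dHeight t t.length = 0) := by
  constructor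
  · rintro ⟨hk, he⟩
    refine ⟨fun k => ?_, ?_⟩
    · have := hk (k+1); rw [dHeight_cons] at this; linarith
    · rw [List.length_cons, dHeight_cons] at he; linarith
  · rintro ⟨hk, he⟩
    refine ⟨fun k => ?_, ?_⟩
    · cases k with
      | zero => rw [dHeight_zero]; linarith
      | succ k => rw [dHeight_cons]; have := hk k; linarith
    · rw [List.length_cons, dHeight_cons]; linarith

lemma dprod_cons (c : ℕ → ℚ) (s : DStep) (t : List DStep) (h : ℤ) :
    (∏ i ∈ Finset.range (s::t).length,
      (match (s::t).getD i DStep.up with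
        | .up => (1:ℚ)
        | .down => c (h + dHeight (s::t) (i+1)).toNat))
    = (match s with | .up => (1:ℚ) | .down => c (h + s.val).toNat) *
      ∏ i ∈ Finset.range t.length,
      (match t.getD i DStep.up with
        | .up => (1:ℚ)
        | .down => c ((h + s.val) + dHeight t (i+1)).toNat) := by
  rw [List.length_cons, Finset.prod_range_succ', mul_comm]
  congr 1
  · show (match s with | .up => (1:ℚ) | .down => c (h + dHeight (s::t) 1).toNat) = _
    rcases s with _ | _
    · rfl
    · show c (h + dHeight (DStep.down::t) 1).toNat = c (h + DStep.down.val).toNat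
      rw [dHeight_cons, dHeight_zero, add_zero]
  · refine Finset.prod_congr rfl fun i _ => ?_
    show (match t.getD i DStep.up with
        | .up => (1:ℚ)
        | .down => c (h + dHeight (s::t) (i+1+1)).toNat) = _
    rcases t.getD i DStep.up with _ | _
    · rfl
    · show c (h + dHeight (s::t) (i+1+1)).toNat = c ((h + s.val) + dHeight t (i+1)).toNat
      rw [dHeight_cons, add_assoc]

open Classical in
lemma dwr_eq (c : ℕ → ℚ) : ∀ (l : List DStep) (h : ℤ), 0 ≤ h →
    dwr c h l = if ((∀ k : ℕ, 0 ≤ h + dHeight l k) ∧ h + dHeight l l.length = 0)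
      then ∏ i ∈ Finset.range l.length,
        (match l.getD i DStep.up with
          | .up => (1 : ℚ)
          | .down => c (h + dHeight l (i + 1)).toNat)
      else 0 := by
  intro l
  induction l with
  | nil =>
    intro h hh
    by_cases h0 : h = 0 <;> simp [dwr, dHeight_nil, h0, hh]
  | cons s t ih =>
    intro h hh
    simp only [dcond_cons s t h hh, dprod_cons]
    rcases s with _ | _
    · show dwr c (h+1) t = _
      rw [ih (h+1) (by linarith)]
      simp [DStep.val]
    · show (if 0 ≤ h - 1 then c (h-1).toNat * dwr c (h-1) t else 0) = _
      by_cases hneg : 0 ≤ h - 1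
      · rw [if_pos hneg, ih (h-1) hneg]
        have hv : h + DStep.down.val = h - 1 := by show h + -1 = h - 1; ring
        rw [hv]
        show c (h-1).toNat * (if _ then _ else _) = _
        rw [mul_ite, mul_zero]
      · rw [if_neg hneg, if_neg]
        rintro ⟨hk, -⟩
        have h0 := hk 0
        rw [dHeight_zero] at h0
        have hv : DStep.down.val = -1 := rfl
        rw [hv] at h0
        omega

def mwr (b lam : ℕ → ℚ) : ℤ → List MStep → ℚ
  | h, [] => if h = 0 then 1 else 0
  | h, .up :: t => mwr b lam (h+1) t
  | h, .down :: t => if 0 ≤ h - 1 then lam (h-1).toNat * mwr b lam (h-1) t else 0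
  | h, .flat :: t => b h.toNat * mwr b lam h t

lemma mHeight_nil (k : ℕ) : mHeight [] k = 0 := by simp [mHeight]

lemma mHeight_zero (l : List MStep) : mHeight l 0 = 0 := by simp [mHeight]

lemma mHeight_cons (s : MStep) (t : List MStep) (k : ℕ) :
    mHeight (s :: t) (k+1) = s.val + mHeight t k := by
  simp [mHeight, List.take_succ_cons]

lemma mcond_cons (s : MStep) (t : List MStep) (h : ℤ) (hh : 0 ≤ h) :
    ((∀ k : ℕ, 0 ≤ h + mHeight (s::t) k) ∧ h + mHeight (s::t) (s::t).length = 0) ↔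
    ((∀ k : ℕ, 0 ≤ (h + s.val) + mHeight t k) ∧ (h + s.val) + mHeight t t.length = 0) := by
  constructor
  · rintro ⟨hk, he⟩
    refine ⟨fun k => ?_, ?_⟩
    · have := hk (k+1); rw [mHeight_cons] at this; linarith
    · rw [List.length_cons, mHeight_cons] at he; linarith
  · rintro ⟨hk, he⟩
    refine ⟨fun k => ?_, ?_⟩
    · cases k with
      | zero => rw [mHeight_zero]; linarith
      | succ k => rw [mHeight_cons]; have := hk k; linarith
    · rw [List.length_cons, mHeight_cons]; linarith

lemma mprod_cons (b lam : ℕ → ℚ) (s : MStep) (t : List MStep) (h : ℤ) :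
    (∏ i ∈ Finset.range (s::t).length,
      (match (s::t).getD i MStep.up with
        | .up => (1:ℚ)
        | .flat => b (h + mHeight (s::t) (i+1)).toNat
        | .down => lam (h + mHeight (s::t) (i+1)).toNat))
    = (match s with
        | .up => (1:ℚ)
        | .flat => b (h + s.val).toNat
        | .down => lam (h + s.val).toNat) *
      ∏ i ∈ Finset.range t.length,
      (match t.getD i MStep.up with
        | .up => (1:ℚ)
        | .flat => b ((h + s.val) + mHeight t (i+1)).toNat
        | .down => lam ((h + s.val) + mHeight t (i+1)).toNat) := by
  rw [List.length_cons, Finset.prod_range_succ', mul_comm]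
  congr 1
  · show (match s with
        | .up => (1:ℚ)
        | .flat => b (h + mHeight (s::t) 1).toNat
        | .down => lam (h + mHeight (s::t) 1).toNat) = _
    rcases s with _ | _ | _
    · rfl
    · show lam (h + mHeight (MStep.down::t) 1).toNat = lam (h + MStep.down.val).toNat
      rw [mHeight_cons, mHeight_zero, add_zero]
    · show b (h + mHeight (MStep.flat::t) 1).toNat = b (h + MStep.flat.val).toNat
      rw [mHeight_cons, mHeight_zero, add_zero]
  · refine Finset.prod_congr rfl fun i _ => ?_
    show (match t.getD i MStep.up with
        | .up => (1:ℚ)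
        | .flat => b (h + mHeight (s::t) (i+1+1)).toNat
        | .down => lam (h + mHeight (s::t) (i+1+1)).toNat) = _
    rcases t.getD i MStep.up with _ | _ | _
    · rfl
    · show lam (h + mHeight (s::t) (i+1+1)).toNat = lam ((h + s.val) + mHeight t (i+1)).toNat
      rw [mHeight_cons, add_assoc]
    · show b (h + mHeight (s::t) (i+1+1)).toNat = b ((h + s.val) + mHeight t (i+1)).toNat
      rw [mHeight_cons, add_assoc]

open Classical in
lemma mwr_eq (b lam : ℕ → ℚ) : ∀ (l : List MStep) (h : ℤ), 0 ≤ h →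
    mwr b lam h l = if ((∀ k : ℕ, 0 ≤ h + mHeight l k) ∧ h + mHeight l l.length = 0)
      then ∏ i ∈ Finset.range l.length,
        (match l.getD i MStep.up with
          | .up => (1 : ℚ)
          | .flat => b (h + mHeight l (i + 1)).toNat
          | .down => lam (h + mHeight l (i + 1)).toNat)
      else 0 := by
  intro l
  induction l with
  | nil =>
    intro h hh
    by_cases h0 : h = 0 <;> simp [mwr, mHeight_nil, h0, hh]
  | cons s t ih =>
    intro h hh
    simp only [mcond_cons s t h hh, mprod_cons]
    rcases s with _ | _ | _
    · show mwr b lam (h+1) t = _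
      rw [ih (h+1) (by linarith)]
      simp [MStep.val]
    · show (if 0 ≤ h - 1 then lam (h-1).toNat * mwr b lam (h-1) t else 0) = _
      by_cases hneg : 0 ≤ h - 1
      · rw [if_pos hneg, ih (h-1) hneg]
        have hv : h + MStep.down.val = h - 1 := by show h + -1 = h - 1; ring
        rw [hv]
        show lam (h-1).toNat * (if _ then _ else _) = _
        rw [mul_ite, mul_zero]
      · rw [if_neg hneg, if_neg]
        rintro ⟨hk, -⟩
        have h0 := hk 0
        rw [mHeight_zero] at h0
        have hv : MStep.down.val = -1 := rfl
        rw [hv] at h0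
        omega
    · show b h.toNat * mwr b lam h t = _
      rw [ih h hh]
      have hv : h + MStep.flat.val = h := by show h + 0 = h; ring
      rw [hv, mul_ite, mul_zero]

lemma sum_DStep (f : DStep → ℚ) : ∑ s, f s = f .up + f .down := by
  rw [show (Finset.univ : Finset DStep) = {DStep.up, DStep.down} from rfl]
  simp

lemma sum_MStep (f : MStep → ℚ) : ∑ s, f s = f .up + f .down + f .flat := by
  rw [show (Finset.univ : Finset MStep) = {MStep.up, MStep.down, MStep.flat} from rfl]
  simp [add_assoc]

lemma sum_ofFn_succ {S : Type} [Fintype S] (m : ℕ) (F : List S → ℚ) :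
    ∑ f : Fin (m+1) → S, F (List.ofFn f) = ∑ s : S, ∑ f : Fin m → S, F (s :: List.ofFn f) := by
  rw [← (Fin.consEquiv (fun _ : Fin (m+1) => S)).sum_comp (fun f => F (List.ofFn f))]
  rw [Fintype.sum_prod_type]
  refine Finset.sum_congr rfl fun s _ => Finset.sum_congr rfl fun f _ => ?_
  congr 1
  simp [Fin.consEquiv, List.ofFn_succ]

lemma key (d b lam : ℕ → ℚ) (hd0 : d 0 = 1) (hb0 : b 0 = 1)
    (hA : ∀ h : ℕ, d (2*h+2) + d (2*h+1) = b (h+1))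
    (hB : ∀ h : ℕ, d (2*h+1) * d (2*h) = lam h) :
    ∀ (m h : ℕ), (∑ f : Fin (2*m) → DStep, dwr d (2*(h:ℤ)) (List.ofFn f))
       = ∑ g : Fin m → MStep, mwr b lam (h:ℤ) (List.ofFn g) := by
  intro m
  induction m with
  | zero =>
    intro h
    rw [show 2*0 = 0 from rfl]
    rw [Fintype.sum_unique, Fintype.sum_unique]
    show dwr d (2*(h:ℤ)) (List.ofFn _) = mwr b lam (h:ℤ) (List.ofFn _)
    rw [List.ofFn_zero, List.ofFn_zero]
    show (if 2*(h:ℤ) = 0 then (1:ℚ) else 0) = if (h:ℤ) = 0 then 1 else 0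
    by_cases h0 : h = 0 <;> simp [h0] <;> omega
  | succ m ih =>
    intro h
    have peel2 : ∑ f : Fin (2*(m+1)) → DStep, dwr d (2*(h:ℤ)) (List.ofFn f)
        = ∑ f : Fin (2*m) → DStep,
            ( dwr d (2*(h:ℤ)) (.up :: .up :: List.ofFn f)
            + dwr d (2*(h:ℤ)) (.up :: .down :: List.ofFn f)
            + (dwr d (2*(h:ℤ)) (.down :: .up :: List.ofFn f)
            + dwr d (2*(h:ℤ)) (.down :: .down :: List.ofFn f)) ) := by
      rw [show 2*(m+1) = (2*m+1)+1 by ring]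
      rw [sum_ofFn_succ (2*m+1) (fun l => dwr d (2*(h:ℤ)) l), sum_DStep]
      rw [sum_ofFn_succ (2*m) (fun l => dwr d (2*(h:ℤ)) (DStep.up :: l)),
          sum_ofFn_succ (2*m) (fun l => dwr d (2*(h:ℤ)) (DStep.down :: l)),
          sum_DStep, sum_DStep,
          ← Finset.sum_add_distrib, ← Finset.sum_add_distrib, ← Finset.sum_add_distrib]
    have peel1 : ∑ g : Fin (m+1) → MStep, mwr b lam (h:ℤ) (List.ofFn g)
        = ∑ g : Fin m → MStep,
            ( mwr b lam (h:ℤ) (.up :: List.ofFn g)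
            + mwr b lam (h:ℤ) (.down :: List.ofFn g)
            + mwr b lam (h:ℤ) (.flat :: List.ofFn g) ) := by
      rw [sum_ofFn_succ m (fun l => mwr b lam (h:ℤ) l), sum_MStep,
          ← Finset.sum_add_distrib, ← Finset.sum_add_distrib]
    rw [peel2, peel1]
    rcases h with _ | k
    · -- h = 0
      have e_uu : ∀ t, dwr d (2*((0:ℕ):ℤ)) (.up :: .up :: t) = dwr d (2*((1:ℕ):ℤ)) t := by
        intro t
        show dwr d (2*((0:ℕ):ℤ)+1+1) t = _
        rw [show 2*((0:ℕ):ℤ)+1+1 = 2*((1:ℕ):ℤ) from by norm_num]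
      have e_ud : ∀ t, dwr d (2*((0:ℕ):ℤ)) (.up :: .down :: t)
          = d 0 * dwr d (2*((0:ℕ):ℤ)) t := by
        intro t
        show (if 0 ≤ 2*((0:ℕ):ℤ)+1-1 then d (2*((0:ℕ):ℤ)+1-1).toNat * dwr d (2*((0:ℕ):ℤ)+1-1) t else 0) = _
        rw [if_pos (show (0:ℤ) ≤ 2*((0:ℕ):ℤ)+1-1 from by norm_num)]
        rw [show (2*((0:ℕ):ℤ)+1-1).toNat = 0 from by norm_num]
        rw [show 2*((0:ℕ):ℤ)+1-1 = 2*((0:ℕ):ℤ) from by ring]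
      have e_d : ∀ (s : DStep) t, dwr d (2*((0:ℕ):ℤ)) (.down :: s :: t) = 0 := by
        intro s t
        show (if 0 ≤ 2*((0:ℕ):ℤ)-1 then _ else (0:ℚ)) = 0
        rw [if_neg (show ¬ (0:ℤ) ≤ 2*((0:ℕ):ℤ)-1 from by norm_num)]
      have f_up : ∀ t, mwr b lam ((0:ℕ):ℤ) (.up :: t) = mwr b lam ((1:ℕ):ℤ) t := by
        intro t
        show mwr b lam (((0:ℕ):ℤ)+1) t = _
        rw [show ((0:ℕ):ℤ)+1 = ((1:ℕ):ℤ) from by norm_num]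
      have f_down : ∀ t, mwr b lam ((0:ℕ):ℤ) (.down :: t) = 0 := by
        intro t
        show (if 0 ≤ ((0:ℕ):ℤ)-1 then _ else (0:ℚ)) = 0
        rw [if_neg (show ¬ (0:ℤ) ≤ ((0:ℕ):ℤ)-1 from by norm_num)]
      have f_flat : ∀ t, mwr b lam ((0:ℕ):ℤ) (.flat :: t) = b 0 * mwr b lam ((0:ℕ):ℤ) t := by
        intro t
        show b (((0:ℕ):ℤ)).toNat * mwr b lam ((0:ℕ):ℤ) t = _
        rw [show (((0:ℕ):ℤ)).toNat = 0 from by norm_num]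
      simp only [e_uu, e_ud, e_d, f_up, f_down, f_flat]
      simp only [Finset.sum_add_distrib, ← Finset.mul_sum, Finset.sum_const_zero]
      rw [ih 1, ih 0, hd0, hb0]
      ring
    · -- h = k + 1
      have e_uu : ∀ t, dwr d (2*((k+1:ℕ):ℤ)) (.up :: .up :: t) = dwr d (2*((k+2:ℕ):ℤ)) t := by
        intro t
        show dwr d (2*((k+1:ℕ):ℤ)+1+1) t = _
        rw [show 2*((k+1:ℕ):ℤ)+1+1 = 2*((k+2:ℕ):ℤ) from by push_cast <;> ring]
      have e_ud : ∀ t, dwr d (2*((k+1:ℕ):ℤ)) (.up :: .down :: t)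
          = d (2*k+2) * dwr d (2*((k+1:ℕ):ℤ)) t := by
        intro t
        show (if 0 ≤ 2*((k+1:ℕ):ℤ)+1-1 then d (2*((k+1:ℕ):ℤ)+1-1).toNat * dwr d (2*((k+1:ℕ):ℤ)+1-1) t else 0) = _
        rw [if_pos (show (0:ℤ) ≤ 2*((k+1:ℕ):ℤ)+1-1 from by push_cast <;> omega)]
        rw [show (2*((k+1:ℕ):ℤ)+1-1).toNat = 2*k+2 from by push_cast <;> omega]
        rw [show 2*((k+1:ℕ):ℤ)+1-1 = 2*((k+1:ℕ):ℤ) from by ring]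
      have e_du : ∀ t, dwr d (2*((k+1:ℕ):ℤ)) (.down :: .up :: t)
          = d (2*k+1) * dwr d (2*((k+1:ℕ):ℤ)) t := by
        intro t
        show (if 0 ≤ 2*((k+1:ℕ):ℤ)-1 then d (2*((k+1:ℕ):ℤ)-1).toNat * dwr d (2*((k+1:ℕ):ℤ)-1) (.up :: t) else 0) = _
        rw [if_pos (show (0:ℤ) ≤ 2*((k+1:ℕ):ℤ)-1 from by push_cast <;> omega)]
        rw [show (2*((k+1:ℕ):ℤ)-1).toNat = 2*k+1 from by push_cast <;> omega]
        have : dwr d (2*((k+1:ℕ):ℤ)-1) (.up :: t) = dwr d (2*((k+1:ℕ):ℤ)-1+1) t := rfl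
        rw [this, show 2*((k+1:ℕ):ℤ)-1+1 = 2*((k+1:ℕ):ℤ) from by ring]
      have e_dd : ∀ t, dwr d (2*((k+1:ℕ):ℤ)) (.down :: .down :: t)
          = d (2*k+1) * (d (2*k) * dwr d (2*((k:ℕ):ℤ)) t) := by
        intro t
        show (if 0 ≤ 2*((k+1:ℕ):ℤ)-1 then d (2*((k+1:ℕ):ℤ)-1).toNat * dwr d (2*((k+1:ℕ):ℤ)-1) (.down :: t) else 0) = _
        rw [if_pos (show (0:ℤ) ≤ 2*((k+1:ℕ):ℤ)-1 from by push_cast <;> omega)]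
        have : dwr d (2*((k+1:ℕ):ℤ)-1) (.down :: t)
            = if 0 ≤ 2*((k+1:ℕ):ℤ)-1-1 then d (2*((k+1:ℕ):ℤ)-1-1).toNat * dwr d (2*((k+1:ℕ):ℤ)-1-1) t else 0 := rfl
        rw [this, if_pos (show (0:ℤ) ≤ 2*((k+1:ℕ):ℤ)-1-1 from by push_cast <;> omega)]
        rw [show (2*((k+1:ℕ):ℤ)-1).toNat = 2*k+1 from by push_cast <;> omega]
        rw [show (2*((k+1:ℕ):ℤ)-1-1).toNat = 2*k from by push_cast <;> omega]
        rw [show 2*((k+1:ℕ):ℤ)-1-1 = 2*((k:ℕ):ℤ) from by push_cast <;> ring]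
      have f_up : ∀ t, mwr b lam ((k+1:ℕ):ℤ) (.up :: t) = mwr b lam ((k+2:ℕ):ℤ) t := by
        intro t
        show mwr b lam (((k+1:ℕ):ℤ)+1) t = _
        rw [show ((k+1:ℕ):ℤ)+1 = ((k+2:ℕ):ℤ) from by push_cast <;> ring]
      have f_down : ∀ t, mwr b lam ((k+1:ℕ):ℤ) (.down :: t)
          = lam k * mwr b lam ((k:ℕ):ℤ) t := by
        intro t
        show (if 0 ≤ ((k+1:ℕ):ℤ)-1 then lam (((k+1:ℕ):ℤ)-1).toNat * mwr b lam (((k+1:ℕ):ℤ)-1) t else 0) = _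
        rw [if_pos (show (0:ℤ) ≤ ((k+1:ℕ):ℤ)-1 from by push_cast <;> omega)]
        rw [show (((k+1:ℕ):ℤ)-1).toNat = k from by push_cast <;> omega]
        rw [show ((k+1:ℕ):ℤ)-1 = ((k:ℕ):ℤ) from by push_cast <;> ring]
      have f_flat : ∀ t, mwr b lam ((k+1:ℕ):ℤ) (.flat :: t)
          = b (k+1) * mwr b lam ((k+1:ℕ):ℤ) t := by
        intro t
        show b (((k+1:ℕ):ℤ)).toNat * mwr b lam ((k+1:ℕ):ℤ) t = _
        rw [show (((k+1:ℕ):ℤ)).toNat = k+1 from by push_cast <;> omega]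
      simp only [e_uu, e_ud, e_du, e_dd, f_up, f_down, f_flat]
      simp only [Finset.sum_add_distrib, ← Finset.mul_sum]
      rw [ih (k+2), ih (k+1), ih k, ← hA k, ← hB k]
      ring

open Classical in
lemma dwr_zero (c : ℕ → ℚ) (l : List DStep) :
    dwr c 0 l = if IsDyck l then dWeight c l else 0 := by
  rw [dwr_eq c l 0 le_rfl]
  have h2 : (∏ i ∈ Finset.range l.length,
      (match l.getD i DStep.up with
        | .up => (1:ℚ)
        | .down => c (0 + dHeight l (i+1)).toNat)) = dWeight c l := by
    unfold dWeight
    refine Finset.prod_congr rfl fun i _ => ?_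
    rcases l.getD i DStep.up with _ | _
    · rfl
    · show c (0 + dHeight l (i+1)).toNat = c (dHeight l (i+1)).toNat
      rw [zero_add]
  rw [h2]
  have h1 : ((∀ k : ℕ, 0 ≤ 0 + dHeight l k) ∧ 0 + dHeight l l.length = 0) ↔ IsDyck l := by
    unfold IsDyck
    simp only [zero_add]
  simp only [h1]

open Classical in
lemma mwr_zero (b lam : ℕ → ℚ) (l : List MStep) :
    mwr b lam 0 l = if IsMotzkin l then mWeight b lam l else 0 := by
  rw [mwr_eq b lam l 0 le_rfl]
  have h2 : (∏ i ∈ Finset.range l.length,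
      (match l.getD i MStep.up with
        | .up => (1:ℚ)
        | .flat => b (0 + mHeight l (i+1)).toNat
        | .down => lam (0 + mHeight l (i+1)).toNat)) = mWeight b lam l := by
    unfold mWeight
    refine Finset.prod_congr rfl fun i _ => ?_
    rcases l.getD i MStep.up with _ | _ | _
    · rfl
    · show lam (0 + mHeight l (i+1)).toNat = lam (mHeight l (i+1)).toNat
      rw [zero_add]
    · show b (0 + mHeight l (i+1)).toNat = b (mHeight l (i+1)).toNat
      rw [zero_add]
  rw [h2]
  have h1 : ((∀ k : ℕ, 0 ≤ 0 + mHeight l k) ∧ 0 + mHeight l l.length = 0) ↔ IsMotzkin l := by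
    unfold IsMotzkin
    simp only [zero_add]
  simp only [h1]

lemma fibZ_natCast (n : ℕ) : fibZ (n : ℤ) = Nat.fib n := rfl

lemma fibZ_negOne : fibZ (-1) = 1 := by decide

lemma fib_cast_rec (k : ℕ) : (Nat.fib (k+2) : ℤ) = Nat.fib k + Nat.fib (k+1) := by
  exact_mod_cast Nat.fib_add_two

lemma fib_cast_rec4 (k : ℕ) : (Nat.fib (k+4) : ℤ) = 3 * Nat.fib (k+2) - Nat.fib k := by
  have h1 := fib_cast_rec (k+2)
  have h2 := fib_cast_rec (k+1)
  have h3 := fib_cast_rec k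
  have e1 : k+2+2 = k+4 := by ring
  have e2 : k+2+1 = k+3 := by ring
  have e3 : k+1+2 = k+3 := by ring
  have e4 : k+1+1 = k+2 := by ring
  rw [e1, e2] at h1; rw [e3, e4] at h2
  linarith

lemma fibL1 : ∀ a : ℕ, (Nat.fib (2*a+1) : ℤ) * Nat.fib (2*a+5) = (Nat.fib (2*a+3) : ℤ)^2 + 1 := by
  intro a
  induction a with
  | zero => norm_num [Nat.fib]
  | succ a ih =>
    have r1 : (Nat.fib (2*a+7) : ℤ) = 3 * Nat.fib (2*a+5) - Nat.fib (2*a+3) := by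
      have := fib_cast_rec4 (2*a+3)
      rw [show 2*a+3+4 = 2*a+7 from by ring, show 2*a+3+2 = 2*a+5 from by ring] at this
      exact this
    have r2 : (Nat.fib (2*a+5) : ℤ) = 3 * Nat.fib (2*a+3) - Nat.fib (2*a+1) := by
      have := fib_cast_rec4 (2*a+1)
      rw [show 2*a+1+4 = 2*a+5 from by ring, show 2*a+1+2 = 2*a+3 from by ring] at this
      exact this
    rw [show 2*(a+1)+1 = 2*a+3 from by ring, show 2*(a+1)+5 = 2*a+7 from by ring,
        show 2*(a+1)+3 = 2*a+5 from by ring]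
    linear_combination (Nat.fib (2*a+3) : ℤ) * r1 - (Nat.fib (2*a+5):ℤ) * r2 + ih

lemma fibL2 (j : ℕ) : (Nat.fib (2*j+1) : ℤ)^2 + (Nat.fib (2*j+3) : ℤ)^2
    = 3 * Nat.fib (2*j+1) * Nat.fib (2*j+3) - 1 := by
  have r2 : (Nat.fib (2*j+5) : ℤ) = 3 * Nat.fib (2*j+3) - Nat.fib (2*j+1) := by
    have := fib_cast_rec4 (2*j+1)
    rw [show 2*j+1+4 = 2*j+5 from by ring, show 2*j+1+2 = 2*j+3 from by ring] at this
    exact this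
  have := fibL1 j
  linear_combination (Nat.fib (2*j+1) : ℤ) * r2 - this

lemma fib_cast_ne (n : ℕ) (hn : 0 < n) : ((Nat.fib n : ℤ) : ℚ) ≠ 0 := by
  have h := Nat.fib_pos.mpr hn
  exact_mod_cast h.ne'


/-- `Dyck_n(d) = Mot_n(b, λ)` for all `n ≥ 0`. -/
theorem dyck_d_eq_motzkin_b_lambda
(d : ℕ → ℚ) (hd0 : d 0 = 1)
    (hdodd : ∀ m : ℕ, 1 ≤ m →
      d (2 * m - 1) = (fibZ (2 * (m : ℤ) - 1) : ℚ) / (fibZ (2 * (m : ℤ) - 3) : ℚ))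
    (hdeven : ∀ m : ℕ, 1 ≤ m →
      d (2 * m) = (fibZ (2 * (m : ℤ) - 3) : ℚ) / (fibZ (2 * (m : ℤ) - 1) : ℚ))
(b lam : ℕ → ℚ) (hb0 : b 0 = 1) (hlam0 : lam 0 = 1)
    (hb : ∀ m : ℕ, 1 ≤ m →
      b m = 3 - 1 / ((fibZ (2 * (m : ℤ) - 1) : ℚ) * (fibZ (2 * (m : ℤ) - 3) : ℚ)))
    (hlam : ∀ m : ℕ, 1 ≤ m → lam m = 1 + 1 / (fibZ (2 * (m : ℤ) - 1) : ℚ) ^ 2)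
    (n : ℕ) :
    dyckSum n d = motSum n b lam := by
  have fib1 : fibZ 1 = 1 := by decide
  have fibm1 : fibZ (-1) = 1 := by decide
  have fib3 : fibZ 3 = 2 := by decide
  have hd1 : d 1 = 1 := by
    have h := hdodd 1 le_rfl
    norm_num at h
    rw [fib1, fibm1] at h
    norm_num at h
    exact h
  have hd2 : d 2 = 1 := by
    have h := hdeven 1 le_rfl
    norm_num at h
    rw [fib1, fibm1] at h
    norm_num at h
    exact h
  have hd3 : d 3 = 2 := by
    have h := hdodd 2 (by omega)
    norm_num at h
    rw [fib1, fib3] at h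
    norm_num at h
    exact h
  have hb1 : b 1 = 2 := by
    have h := hb 1 le_rfl
    norm_num at h
    rw [fib1, fibm1] at h
    norm_num at h
    exact h
  have hlam1 : lam 1 = 2 := by
    have h := hlam 1 le_rfl
    norm_num at h
    rw [fib1] at h
    norm_num at h
    exact h
  have hA : ∀ k : ℕ, d (2*k+2) + d (2*k+1) = b (k+1) := by
    intro k
    rcases k with _ | j
    · show d 2 + d 1 = b 1
      rw [hd2, hd1, hb1]; norm_num
    · rw [show 2*(j+1)+2 = 2*(j+2) from by ring, show 2*(j+1)+1 = 2*(j+2)-1 from by omega]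
      rw [hdeven (j+2) (by omega), hdodd (j+2) (by omega), hb (j+2) (by omega)]
      rw [show 2*((j+2:ℕ):ℤ)-1 = ((2*j+3:ℕ):ℤ) from by push_cast; ring,
          show 2*((j+2:ℕ):ℤ)-3 = ((2*j+1:ℕ):ℤ) from by push_cast; ring]
      simp only [fibZ_natCast]
      have hA0 : ((Nat.fib (2*j+1) : ℤ) : ℚ) ≠ 0 := fib_cast_ne _ (by omega)
      have hB0 : ((Nat.fib (2*j+3) : ℤ) : ℚ) ≠ 0 := fib_cast_ne _ (by omega)
      have hid : ((Nat.fib (2*j+1) : ℤ) : ℚ)^2 + ((Nat.fib (2*j+3) : ℤ) : ℚ)^2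
          = 3 * ((Nat.fib (2*j+1) : ℤ) : ℚ) * ((Nat.fib (2*j+3) : ℤ) : ℚ) - 1 := by
        exact_mod_cast fibL2 j
      field_simp
      linear_combination hid
  have hB : ∀ k : ℕ, d (2*k+1) * d (2*k) = lam k := by
    intro k
    rcases k with _ | _ | j
    · show d 1 * d 0 = lam 0
      rw [hd1, hd0, hlam0]; norm_num
    · show d 3 * d 2 = lam 1
      rw [hd3, hd2, hlam1]; norm_num
    · rw [show 2*(j+2)+1 = 2*(j+3)-1 from by omega]
      rw [hdodd (j+3) (by omega), hdeven (j+2) (by omega), hlam (j+2) (by omega)]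
      rw [show 2*((j+3:ℕ):ℤ)-1 = ((2*j+5:ℕ):ℤ) from by push_cast; ring,
          show 2*((j+3:ℕ):ℤ)-3 = ((2*j+3:ℕ):ℤ) from by push_cast; ring,
          show 2*((j+2:ℕ):ℤ)-1 = ((2*j+3:ℕ):ℤ) from by push_cast; ring,
          show 2*((j+2:ℕ):ℤ)-3 = ((2*j+1:ℕ):ℤ) from by push_cast; ring]
      simp only [fibZ_natCast]
      have hA0 : ((Nat.fib (2*j+1) : ℤ) : ℚ) ≠ 0 := fib_cast_ne _ (by omega)
      have hB0 : ((Nat.fib (2*j+3) : ℤ) : ℚ) ≠ 0 := fib_cast_ne _ (by omega)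
      have hid : ((Nat.fib (2*j+1) : ℤ) : ℚ) * ((Nat.fib (2*j+5) : ℤ) : ℚ)
          = ((Nat.fib (2*j+3) : ℤ) : ℚ)^2 + 1 := by
        exact_mod_cast fibL1 j
      field_simp
      linear_combination hid
  calc dyckSum n d
      = ∑ f : Fin (2*n) → DStep, dwr d 0 (List.ofFn f) := by
        unfold dyckSum
        refine Finset.sum_congr rfl fun f _ => ?_
        rw [dwr_zero]
    _ = ∑ g : Fin n → MStep, mwr b lam 0 (List.ofFn g) := by
        have h := key d b lam hd0 hb0 hA hB n 0
        simpa using h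
    _ = motSum n b lam := by
        unfold motSum
        refine Finset.sum_congr rfl fun g _ => ?_
        rw [mwr_zero]
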